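/- arXiv:2510.10902 — 2 statements merged into one kernel-verified Lean document; each statement's English description precedes it below -/
import Mathlib

section
/- Let $A \in \mathbb{R}^{n\times n}$ be symmetric positive semidefinite and $q \in \mathrm{range}(A)$. Then $\mathrm{pdet}(A + qq^\top) = \mathrm{pdet}(A)\,(1 + q^\top A^+ q)$, where $\mathrm{pdet}$ denotes the pseudo-determinant (product of nonzero eigenvalues) and $A^+$ the Moore–Penrose pseudoinverse. -/
open Matrix
open scoped Classical

/-- The pseudo-determinant of a real square matrix: the product of the nonzero eigenvalues
if the matrix is symmetric (Hermitian), and (junk value) `0` otherwise. For the zero matrix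
the empty product gives `1`. -/
noncomputable def pdet {n : ℕ} (A : Matrix (Fin n) (Fin n) ℝ) : ℝ :=
  if h : A.IsHermitian then
    ∏ i : Fin n, (if h.eigenvalues i = 0 then 1 else h.eigenvalues i)
  else 0

/-- `B` satisfies the four Penrose conditions for being the Moore–Penrose pseudoinverse
of `A` (over `ℝ`, where conjugate-transpose is transpose). -/
def IsMoorePenroseInverse {n : ℕ} (A B : Matrix (Fin n) (Fin n) ℝ) : Prop :=
  A * B * A = A ∧ B * A * B = B ∧ (A * B)ᵀ = A * B ∧ (B * A)ᵀ = B * A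

open Polynomial

lemma my_charpoly_conj {m : Type*} [Fintype m] [DecidableEq m] {R : Type*} [CommRing R]
    (U V M : Matrix m m R) (hUV : U * V = 1) :
    (U * M * V).charpoly = M.charpoly := by
  have hmapUV : U.map C * V.map C = 1 := by
    rw [← Matrix.map_mul, hUV, Matrix.map_one _ (map_zero C) (map_one C)]
  have hc : charmatrix (U * M * V) = U.map C * charmatrix M * V.map C := by
    rw [charmatrix, charmatrix, Matrix.mul_sub, Matrix.sub_mul]
    congr 1
    · have hcomm : U.map C * Matrix.scalar m (X : R[X]) =
          Matrix.scalar m (X : R[X]) * U.map C :=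
        ((Matrix.scalar_commute (X : R[X]) (fun r => Commute.all _ _) (U.map C)).eq).symm
      rw [hcomm, mul_assoc, hmapUV, mul_one]
    · simp only [RingHom.mapMatrix_apply, Matrix.map_mul]
  rw [Matrix.charpoly, Matrix.charpoly, hc, det_mul, det_mul,
    mul_comm ((U.map C).det) (charmatrix M).det, mul_assoc, ← det_mul, hmapUV, det_one, mul_one]

lemma my_charpoly_diagonal {m : Type*} [Fintype m] [DecidableEq m] (d : m → ℝ) :
    (Matrix.diagonal d).charpoly = ∏ i, (X - C (d i)) := by
  have h : charmatrix (Matrix.diagonal d) = Matrix.diagonal (fun i => (X : ℝ[X]) - C (d i)) := by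
    rw [charmatrix, Matrix.scalar_apply, RingHom.mapMatrix_apply,
      Matrix.diagonal_map (map_zero C), Matrix.diagonal_sub]
  rw [Matrix.charpoly, h, det_diagonal]

lemma my_roots_charpoly {m : Type*} [Fintype m] [DecidableEq m]
    {M : Matrix m m ℝ} (hM : M.IsHermitian) :
    M.charpoly.roots = Finset.univ.val.map hM.eigenvalues := by
  have hU : (hM.eigenvectorUnitary : Matrix m m ℝ) * star (hM.eigenvectorUnitary : Matrix m m ℝ) = 1 :=
    (Matrix.mem_unitaryGroup_iff).mp (hM.eigenvectorUnitary).2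
  have hd : M.charpoly = (Matrix.diagonal hM.eigenvalues).charpoly := by
    conv_lhs => rw [hM.spectral_theorem]
    have : Matrix.diagonal (RCLike.ofReal ∘ hM.eigenvalues) = Matrix.diagonal hM.eigenvalues := by
      simp [RCLike.ofReal_real_eq_id]
    rw [this]
    exact my_charpoly_conj _ _ _ hU
  rw [hd, my_charpoly_diagonal, Finset.prod_eq_multiset_prod,
    show Finset.univ.val.map (fun i => (X : ℝ[X]) - C (hM.eigenvalues i)) =
      (Finset.univ.val.map hM.eigenvalues).map (fun a => X - C a) by rw [Multiset.map_map]; rfl]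
  exact roots_multiset_prod_X_sub_C _

lemma my_pdet_eq_roots {n : ℕ} {M : Matrix (Fin n) (Fin n) ℝ} (hM : M.IsHermitian) :
    pdet M = (M.charpoly.roots.map (fun x => if x = 0 then 1 else x)).prod := by
  rw [pdet, dif_pos hM, my_roots_charpoly hM, Multiset.map_map, Finset.prod_eq_multiset_prod]
  rfl

/-- For symmetric positive semidefinite `A` and `q` in the range of `A`,
`pdet (A + q qᵀ) = pdet A * (1 + qᵀ A⁺ q)`, where `A⁺` is the Moore–Penrose pseudoinverse. -/
theorem pdet_add_outer_of_mem_range {n : ℕ} (A Ap : Matrix (Fin n) (Fin n) ℝ)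
    (hA : A.PosSemidef) (hAp : IsMoorePenroseInverse A Ap)
    (q : Fin n → ℝ) (hq : ∃ y, A *ᵥ y = q) :
    pdet (A + vecMulVec q q) = pdet A * (1 + q ⬝ᵥ (Ap *ᵥ q)) := by
  classical
  obtain ⟨y, hy⟩ := hq
  have h := hA.1
  set μ : Fin n → ℝ := h.eigenvalues with hμdef
  set U : Matrix (Fin n) (Fin n) ℝ := (h.eigenvectorUnitary : Matrix (Fin n) (Fin n) ℝ) with hUdef
  set V : Matrix (Fin n) (Fin n) ℝ := star (h.eigenvectorUnitary : Matrix (Fin n) (Fin n) ℝ) with hVdef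
  have hUV : U * V = 1 := (Matrix.mem_unitaryGroup_iff).mp (h.eigenvectorUnitary).2
  have hVU : V * U = 1 := (Matrix.mem_unitaryGroup_iff').mp (h.eigenvectorUnitary).2
  have hVt : V = Uᵀ := by
    rw [hVdef, hUdef, Matrix.star_eq_conjTranspose, Matrix.conjTranspose_eq_transpose_of_trivial]
  have hspec : A = U * Matrix.diagonal μ * V := by
    have := h.spectral_theorem
    have h2 : Matrix.diagonal (RCLike.ofReal ∘ h.eigenvalues) = Matrix.diagonal μ := by
      simp [RCLike.ofReal_real_eq_id, hμdef]
    rw [h2] at this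
    exact this
  set p : Fin n → ℝ := V *ᵥ q with hpdef
  set z : Fin n → ℝ := V *ᵥ y with hzdef
  -- p i = μ i * z i
  have hVA : V * A = Matrix.diagonal μ * V := by
    rw [hspec, ← mul_assoc, ← mul_assoc, hVU, one_mul]
  have hp : ∀ i, p i = μ i * z i := by
    intro i
    rw [hpdef, ← hy, mulVec_mulVec, hVA, ← mulVec_mulVec, ← hzdef, mulVec_diagonal]
  have hq' : q = U *ᵥ p := by
    rw [hpdef, mulVec_mulVec, hUV, one_mulVec]
  -- conjugation
  set E : Matrix (Fin n) (Fin n) ℝ := Matrix.diagonal μ + vecMulVec p p with hEdef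
  have hconj : A + vecMulVec q q = U * E * V := by
    rw [hEdef, Matrix.mul_add, Matrix.add_mul, ← hspec]
    congr 1
    rw [hq', vecMulVec_eq Unit, vecMulVec_eq Unit, Matrix.replicateCol_mulVec, Matrix.replicateRow_mulVec, hVt]
    rw [Matrix.transpose_mul, Matrix.transpose_replicateCol]
    simp only [Matrix.mul_assoc]
  have hAt : Aᵀ = A := by
    rw [← Matrix.conjTranspose_eq_transpose_of_trivial]; exact h
  have hAq : (A + vecMulVec q q).IsHermitian := by
    rw [Matrix.IsHermitian, Matrix.conjTranspose_eq_transpose_of_trivial, Matrix.transpose_add,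
      hAt]
    congr 1
    ext i j
    simp [vecMulVec_apply, mul_comm]
  have hcp : (A + vecMulVec q q).charpoly = E.charpoly := by
    rw [hconj]; exact my_charpoly_conj _ _ _ hUV
  -- block structure
  set P : Fin n → Prop := fun i => μ i ≠ 0 with hPdef
  set B : Matrix {i // P i} {i // P i} ℝ :=
    Matrix.diagonal (fun i : {i // P i} => μ (i : Fin n)) +
      vecMulVec (fun i : {i // P i} => p (i : Fin n)) (fun i : {i // P i} => p (i : Fin n))
    with hBdef
  have hp0 : ∀ c, μ c = 0 → p c = 0 := fun c hc => by rw [hp c, hc, zero_mul]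
  have hE0 : ∀ a b : Fin n, μ a = 0 ∨ μ b = 0 → E a b = 0 := by
    intro a b hab
    have hdiag : Matrix.diagonal μ a b = 0 := by
      rcases eq_or_ne a b with rfl | hne
      · rcases hab with h1 | h1 <;> simpa using h1
      · exact Matrix.diagonal_apply_ne _ hne
    have hpp : p a * p b = 0 := by
      rcases hab with h1 | h1
      · rw [hp0 a h1, zero_mul]
      · rw [hp0 b h1, mul_zero]
    rw [hEdef]
    simp [Matrix.add_apply, vecMulVec_apply, hdiag, hpp]
  have hBE : ∀ i j : {i // P i}, B i j = E (↑i) (↑j) := by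
    intro i j
    rw [hBdef, hEdef]
    simp only [Matrix.add_apply, vecMulVec_apply]
    congr 1
    rcases eq_or_ne i j with rfl | hne
    · simp
    · rw [Matrix.diagonal_apply_ne _ hne,
        Matrix.diagonal_apply_ne _ (fun hc => hne (Subtype.ext hc))]
  have hre : (Matrix.reindex (Equiv.sumCompl P).symm (Equiv.sumCompl P).symm E)
      = Matrix.fromBlocks B 0 0 0 := by
    ext i j
    rcases i with i | i <;> rcases j with j | j
    · simp only [Matrix.reindex_apply, Matrix.submatrix_apply, Equiv.symm_symm,
        Equiv.sumCompl_apply_inl, Matrix.fromBlocks_apply₁₁]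
      exact (hBE i j).symm
    · simp only [Matrix.reindex_apply, Matrix.submatrix_apply, Equiv.symm_symm,
        Equiv.sumCompl_apply_inl, Equiv.sumCompl_apply_inr, Matrix.fromBlocks_apply₁₂,
        Matrix.zero_apply]
      exact hE0 _ _ (Or.inr (not_not.mp j.2))
    · simp only [Matrix.reindex_apply, Matrix.submatrix_apply, Equiv.symm_symm,
        Equiv.sumCompl_apply_inl, Equiv.sumCompl_apply_inr, Matrix.fromBlocks_apply₂₁,
        Matrix.zero_apply]
      exact hE0 _ _ (Or.inl (not_not.mp i.2))
    · simp only [Matrix.reindex_apply, Matrix.submatrix_apply, Equiv.symm_symm,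
        Equiv.sumCompl_apply_inr, Matrix.fromBlocks_apply₂₂, Matrix.zero_apply]
      exact hE0 _ _ (Or.inl (not_not.mp i.2))
  have hcharE : E.charpoly = B.charpoly * X ^ (Fintype.card {i // ¬ P i}) := by
    rw [← Matrix.charpoly_reindex (Equiv.sumCompl P).symm E, hre,
      Matrix.charpoly_fromBlocks_zero₂₁]
    congr 1
    rw [← Matrix.diagonal_zero, my_charpoly_diagonal]
    simp [Finset.prod_const, Finset.card_univ]
  have hB : B.IsHermitian := by
    rw [Matrix.IsHermitian, Matrix.conjTranspose_eq_transpose_of_trivial, hBdef,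
      Matrix.transpose_add, Matrix.diagonal_transpose]
    congr 1
    ext i j
    simp [vecMulVec_apply, mul_comm]
  -- determinant of B
  set s : ℝ := ∑ i : {i // P i}, p (i : Fin n) * (μ (i : Fin n))⁻¹ * p (i : Fin n) with hsdef
  have hprodne : (∏ i : {i // P i}, μ (i : Fin n)) ≠ 0 :=
    Finset.prod_ne_zero_iff.mpr (fun i _ => i.2)
  have hdetB : B.det = (∏ i : {i // P i}, μ (i : Fin n)) * (1 + s) := by
    rw [hBdef, vecMulVec_eq Unit,
      Matrix.det_add_replicateCol_mul_replicateRow (by rw [det_diagonal]; exact hprodne.isUnit),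
      det_diagonal]
    congr 1
    have hinv : (Matrix.diagonal fun i : {i // P i} => μ (i : Fin n))⁻¹
        = Matrix.diagonal (fun i : {i // P i} => (μ (i : Fin n))⁻¹) := by
      apply Matrix.inv_eq_right_inv
      have h1 : (fun i : {i // P i} => μ (i : Fin n) * (μ (i : Fin n))⁻¹) = fun _ => (1 : ℝ) :=
        funext fun i => mul_inv_cancel₀ i.2
      rw [Matrix.diagonal_mul_diagonal, h1, Matrix.diagonal_one]
    rw [Matrix.det_unique]
    simp only [Matrix.add_apply, Matrix.one_apply_eq, Matrix.mul_apply, hinv,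
      Matrix.replicateRow_apply, Matrix.replicateCol_apply, Matrix.diagonal_apply]
    congr 1
    rw [hsdef]
    refine Finset.sum_congr rfl fun x _ => ?_
    rw [Finset.sum_eq_single x]
    · simp
    · intro b _ hb; simp [hb]
    · intro hx; exact absurd (Finset.mem_univ x) hx
  have hs0 : 0 ≤ s := by
    rw [hsdef]
    apply Finset.sum_nonneg
    intro i _
    have h1 : 0 ≤ μ (i : Fin n) := hA.eigenvalues_nonneg _
    have h2 : 0 ≤ p (i : Fin n) * p (i : Fin n) * (μ (i : Fin n))⁻¹ :=
      mul_nonneg (mul_self_nonneg _) (inv_nonneg.mpr h1)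
    calc (0 : ℝ) ≤ p (i : Fin n) * p (i : Fin n) * (μ (i : Fin n))⁻¹ := h2
      _ = p (i : Fin n) * (μ (i : Fin n))⁻¹ * p (i : Fin n) := by ring
  have hdetBne : B.det ≠ 0 := by
    rw [hdetB]
    exact mul_ne_zero hprodne (by positivity)
  have hdetB_eig : B.det = ∏ i, hB.eigenvalues i := by
    have h1 := hB.det_eq_prod_eigenvalues
    simpa [RCLike.ofReal_real_eq_id] using h1
  have hν : ∀ i, hB.eigenvalues i ≠ 0 := by
    intro i hz
    rw [hdetB_eig] at hdetBne
    exact hdetBne (Finset.prod_eq_zero (Finset.mem_univ i) hz)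
  -- left-hand side
  have hf : pdet (A + vecMulVec q q) = B.det := by
    rw [my_pdet_eq_roots hAq, hcp, hcharE,
      Polynomial.roots_mul (by rw [← hcharE]; exact E.charpoly_monic.ne_zero),
      Polynomial.roots_pow, Polynomial.roots_X, Multiset.nsmul_singleton,
      Multiset.map_add, Multiset.prod_add, Multiset.map_replicate, if_pos rfl,
      Multiset.prod_replicate, one_pow, mul_one, my_roots_charpoly hB, Multiset.map_map]
    have h1 : ((fun x : ℝ => if x = 0 then 1 else x) ∘ hB.eigenvalues) = hB.eigenvalues := by
      funext i; simp [hν i]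
    rw [h1, hdetB_eig, ← Finset.prod_eq_multiset_prod]
  -- right-hand side : pdet A
  have hpdetA : pdet A = ∏ i : {i // P i}, μ (i : Fin n) := by
    rw [pdet, dif_pos h,
      ← Finset.prod_subtype (Finset.filter P Finset.univ)
        (fun x => by simp [hPdef]) (fun i => μ i),
      Finset.prod_filter]
    refine Finset.prod_congr rfl fun x _ => ?_
    by_cases hx : μ x = 0 <;> simp [hPdef, hx, hμdef]
  -- right-hand side : the quadratic form
  have hyq : q ⬝ᵥ (Ap *ᵥ q) = y ⬝ᵥ (A *ᵥ y) := by
    conv_lhs => rw [← hy, mulVec_mulVec,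
      show A *ᵥ y = y ᵥ* A from (Matrix.vecMul_transpose _ _).symm.trans (by rw [hAt])]
    rw [← Matrix.dotProduct_mulVec, mulVec_mulVec, ← Matrix.mul_assoc, hAp.1]
  have hsum : s = y ⬝ᵥ (A *ᵥ y) := by
    have h1 : y ⬝ᵥ (A *ᵥ y) = ∑ i, μ i * (z i * z i) := by
      conv_lhs => rw [hspec, ← mulVec_mulVec, ← mulVec_mulVec]
      rw [Matrix.dotProduct_mulVec]
      have h2 : y ᵥ* U = z := by
        rw [hzdef, hVt, Matrix.mulVec_transpose]
      rw [h2, ← hzdef]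
      simp only [dotProduct, mulVec_diagonal]
      exact Finset.sum_congr rfl fun i _ => by ring
    have hterm : ∀ i : {i // P i},
        p (i : Fin n) * (μ (i : Fin n))⁻¹ * p (i : Fin n) = μ (i : Fin n) * (z (i : Fin n) * z (i : Fin n)) := by
      intro i
      rw [hp]
      have hne : μ (i : Fin n) ≠ 0 := i.2
      field_simp
    rw [h1, hsdef]
    rw [Finset.sum_congr rfl fun i _ => hterm i]
    rw [← Finset.sum_subtype (Finset.filter P Finset.univ)
        (fun x => by simp [hPdef]) (fun i => μ i * (z i * z i)),
      Finset.sum_filter]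
    refine Finset.sum_congr rfl fun x _ => ?_
    by_cases hx : μ x = 0
    · simp [hPdef, hx]
    · simp [hPdef, hx]
  rw [hf, hdetB, hpdetA, hyq, ← hsum]
end

section
/- Consider mini-batch SGD where $\theta_{i+1} = \theta_i - \eta \hat g_i$ for $i = 0,\dots,N_r-1$, with $\theta_0$ independent of the membership indicator $T_j$ (so $I[T_j;\theta_0]=0$). Then for any function $\mathcal{F}$, $I[T_j; \mathcal{F}(\theta_{N_r})] \le \sum_{i=0}^{N_r-1} I[T_j; \hat g_i \mid \theta_i]$. -/
open Finset

/-- Probability that the (discrete) random variable `X` on the finite space `Ω`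
with mass function `p` takes the value `a`. -/
noncomputable def pmass {Ω α : Type*} [Fintype Ω] [DecidableEq α]
    (p : Ω → ℝ) (X : Ω → α) (a : α) : ℝ :=
  ∑ ω, if X ω = a then p ω else 0

/-- Shannon entropy of a discrete random variable (convention `0 log 0 = 0`,
automatic since `Real.log 0 = 0`). -/
noncomputable def entropy {Ω α : Type*} [Fintype Ω] [Fintype α] [DecidableEq α]
    (p : Ω → ℝ) (X : Ω → α) : ℝ :=
  -∑ a, pmass p X a * Real.log (pmass p X a)

/-- Mutual information `I(X; Y) = H(X) + H(Y) - H(X, Y)`. -/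
noncomputable def mutualInfo {Ω α β : Type*} [Fintype Ω]
    [Fintype α] [DecidableEq α] [Fintype β] [DecidableEq β]
    (p : Ω → ℝ) (X : Ω → α) (Y : Ω → β) : ℝ :=
  entropy p X + entropy p Y - entropy p fun ω => (X ω, Y ω)

/-- Conditional entropy `H(Y ∣ X) = H(Y, X) - H(X)`. -/
noncomputable def condEntropy {Ω α β : Type*} [Fintype Ω]
    [Fintype α] [DecidableEq α] [Fintype β] [DecidableEq β]
    (p : Ω → ℝ) (Y : Ω → β) (X : Ω → α) : ℝ :=
  entropy p (fun ω => (Y ω, X ω)) - entropy p X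

/-- Conditional mutual information
`I(T; Y ∣ X) = H(T, X) + H(Y, X) - H(X) - H(T, Y, X)`. -/
noncomputable def condMutualInfo {Ω α β γ : Type*} [Fintype Ω]
    [Fintype α] [DecidableEq α] [Fintype β] [DecidableEq β] [Fintype γ] [DecidableEq γ]
    (p : Ω → ℝ) (T : Ω → γ) (Y : Ω → β) (X : Ω → α) : ℝ :=
  entropy p (fun ω => (T ω, X ω)) + entropy p (fun ω => (Y ω, X ω))
    - entropy p X - entropy p fun ω => (T ω, Y ω, X ω)

/-- The mass function obtained by conditioning `p` on the event `E`. -/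
noncomputable def condPMF {Ω : Type*} [Fintype Ω]
    (p : Ω → ℝ) (E : Ω → Prop) [DecidablePred E] : Ω → ℝ :=
  fun ω => if E ω then p ω / (∑ ω' ∈ univ.filter E, p ω') else 0

section Aux
variable {Ω α β γ : Type*} [Fintype Ω]

lemma pmass_nonneg [DecidableEq α] (p : Ω → ℝ) (hp : ∀ ω, 0 ≤ p ω) (X : Ω → α) (a : α) :
    0 ≤ pmass p X a :=
  Finset.sum_nonneg fun ω _ => by split <;> simp [hp ω]

lemma sum_pmass [Fintype α] [DecidableEq α] (p : Ω → ℝ) (X : Ω → α) :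
    ∑ a, pmass p X a = ∑ ω, p ω := by
  unfold pmass
  rw [Finset.sum_comm]
  simp

lemma pmass_pair_fst [Fintype β] [DecidableEq α] [DecidableEq β]
    (p : Ω → ℝ) (X : Ω → α) (Y : Ω → β) (a : α) :
    ∑ b, pmass p (fun ω => (X ω, Y ω)) (a, b) = pmass p X a := by
  unfold pmass
  rw [Finset.sum_comm]
  congr 1; ext ω
  simp [Prod.ext_iff, ite_and]

lemma pmass_pair_snd [Fintype α] [DecidableEq α] [DecidableEq β]
    (p : Ω → ℝ) (X : Ω → α) (Y : Ω → β) (b : β) :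
    ∑ a, pmass p (fun ω => (X ω, Y ω)) (a, b) = pmass p Y b := by
  unfold pmass
  rw [Finset.sum_comm]
  congr 1; ext ω
  simp [Prod.ext_iff, ite_and]

end Aux
lemma gibbs_term {q x y : ℝ} (hq : 0 ≤ q) (hx : q ≤ x) (hy : q ≤ y) (hx0 : 0 ≤ x)
    (hy0 : 0 ≤ y) :
    q - x * y ≤ q * Real.log q - q * Real.log x - q * Real.log y := by
  rcases eq_or_lt_of_le hq with h0 | h0
  · simp [← h0]
    positivity
  · have hxp : 0 < x := lt_of_lt_of_le h0 hx
    have hyp : 0 < y := lt_of_lt_of_le h0 hy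
    have hlog : Real.log (x * y / q) ≤ x * y / q - 1 :=
      Real.log_le_sub_one_of_pos (by positivity)
    have hlogeq : Real.log (x * y / q) = Real.log x + Real.log y - Real.log q := by
      rw [Real.log_div (by positivity) (ne_of_gt h0), Real.log_mul (ne_of_gt hxp) (ne_of_gt hyp)]
    rw [hlogeq] at hlog
    have h2 := mul_le_mul_of_nonneg_left hlog (le_of_lt h0)
    have hcancel : q * (x * y / q) = x * y := by field_simp
    nlinarith [h2, hcancel]

section Aux2
variable {Ω α β γ : Type*} [Fintype Ω]

lemma pmass_pair_le_fst [Fintype β] [DecidableEq α] [DecidableEq β]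
    (p : Ω → ℝ) (hp : ∀ ω, 0 ≤ p ω) (X : Ω → α) (Y : Ω → β) (a : α) (b : β) :
    pmass p (fun ω => (X ω, Y ω)) (a, b) ≤ pmass p X a := by
  rw [← pmass_pair_fst p X Y a]
  exact Finset.single_le_sum (f := fun b => pmass p (fun ω => (X ω, Y ω)) (a, b))
    (fun c _ => pmass_nonneg p hp _ _) (Finset.mem_univ b)

lemma pmass_pair_le_snd [Fintype α] [DecidableEq α] [DecidableEq β]
    (p : Ω → ℝ) (hp : ∀ ω, 0 ≤ p ω) (X : Ω → α) (Y : Ω → β) (a : α) (b : β) :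
    pmass p (fun ω => (X ω, Y ω)) (a, b) ≤ pmass p Y b := by
  rw [← pmass_pair_snd p X Y b]
  exact Finset.single_le_sum (f := fun a => pmass p (fun ω => (X ω, Y ω)) (a, b))
    (fun c _ => pmass_nonneg p hp _ _) (Finset.mem_univ a)

lemma mutualInfo_nonneg [Fintype α] [DecidableEq α] [Fintype β] [DecidableEq β]
    (p : Ω → ℝ) (hp : ∀ ω, 0 ≤ p ω) (hp1 : ∑ ω, p ω = 1) (X : Ω → α) (Y : Ω → β) :
    0 ≤ mutualInfo p X Y := by
  have hX : entropy p X = -∑ a, ∑ b,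
      pmass p (fun ω => (X ω, Y ω)) (a, b) * Real.log (pmass p X a) := by
    unfold entropy
    congr 1
    refine Finset.sum_congr rfl fun a _ => ?_
    rw [← Finset.sum_mul, pmass_pair_fst]
  have hY : entropy p Y = -∑ a, ∑ b,
      pmass p (fun ω => (X ω, Y ω)) (a, b) * Real.log (pmass p Y b) := by
    unfold entropy
    rw [Finset.sum_comm]
    congr 1
    refine Finset.sum_congr rfl fun b _ => ?_
    rw [← Finset.sum_mul, pmass_pair_snd]
  have hXY : entropy p (fun ω => (X ω, Y ω)) = -∑ a, ∑ b,
      pmass p (fun ω => (X ω, Y ω)) (a, b) *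
        Real.log (pmass p (fun ω => (X ω, Y ω)) (a, b)) := by
    unfold entropy
    rw [Fintype.sum_prod_type]
  unfold mutualInfo
  rw [hX, hY, hXY]
  have hle : ∑ a, ∑ b, (pmass p (fun ω => (X ω, Y ω)) (a, b)
        - pmass p X a * pmass p Y b)
      ≤ ∑ a, ∑ b, (pmass p (fun ω => (X ω, Y ω)) (a, b) *
          Real.log (pmass p (fun ω => (X ω, Y ω)) (a, b))
        - pmass p (fun ω => (X ω, Y ω)) (a, b) * Real.log (pmass p X a)
        - pmass p (fun ω => (X ω, Y ω)) (a, b) * Real.log (pmass p Y b)) :=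
    Finset.sum_le_sum fun a _ => Finset.sum_le_sum fun b _ =>
      gibbs_term (pmass_nonneg p hp _ _) (pmass_pair_le_fst p hp X Y a b)
        (pmass_pair_le_snd p hp X Y a b) (pmass_nonneg p hp _ _) (pmass_nonneg p hp _ _)
  have hsum : ∑ a, ∑ b, (pmass p (fun ω => (X ω, Y ω)) (a, b)
      - pmass p X a * pmass p Y b) = 0 := by
    have h1 : ∑ a, ∑ b, pmass p X a * pmass p Y b = 1 := by
      rw [← Finset.sum_mul_sum, sum_pmass, sum_pmass, hp1, mul_one]
    have h2 : ∑ a, ∑ b, pmass p (fun ω => (X ω, Y ω)) (a, b) = 1 := by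
      rw [← Fintype.sum_prod_type, sum_pmass, hp1]
    simp only [Finset.sum_sub_distrib, h1, h2, sub_self]
  rw [hsum] at hle
  simp only [Finset.sum_sub_distrib] at hle
  linarith

end Aux2
section Aux3
variable {Ω α β γ : Type*} [Fintype Ω]

lemma entropy_comp_injective [Fintype α] [DecidableEq α] [Fintype β] [DecidableEq β]
    (p : Ω → ℝ) (X : Ω → α) (g : α → β) (hg : Function.Injective g) :
    entropy p (fun ω => g (X ω)) = entropy p X := by
  have h1 : ∀ a, pmass p (fun ω => g (X ω)) (g a) = pmass p X a := by
    intro a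
    unfold pmass
    refine Finset.sum_congr rfl fun ω _ => ?_
    simp [hg.eq_iff]
  have h0 : ∀ b ∈ Finset.univ, b ∉ Finset.univ.image g →
      pmass p (fun ω => g (X ω)) b * Real.log (pmass p (fun ω => g (X ω)) b) = 0 := by
    intro b _ hb
    have : pmass p (fun ω => g (X ω)) b = 0 := by
      unfold pmass
      refine Finset.sum_eq_zero fun ω _ => ?_
      have : g (X ω) ≠ b := fun h => hb (Finset.mem_image.2 ⟨X ω, Finset.mem_univ _, h⟩)
      simp [this]
    simp [this]
  unfold entropy
  congr 1
  rw [← Finset.sum_subset (Finset.subset_univ (Finset.univ.image g)) h0,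
    Finset.sum_image (fun x _ y _ h => hg h)]
  exact Finset.sum_congr rfl fun a _ => by rw [h1]

lemma condPMF_nonneg (p : Ω → ℝ) (hp : ∀ ω, 0 ≤ p ω) (E : Ω → Prop) [DecidablePred E]
    (ω : Ω) : 0 ≤ condPMF p E ω := by
  unfold condPMF
  split
  · exact div_nonneg (hp ω) (Finset.sum_nonneg fun ω' _ => hp ω')
  · exact le_refl 0

lemma filter_sum_eq_pmass [DecidableEq α] (p : Ω → ℝ) (X : Ω → α) (x : α) :
    ∑ ω ∈ Finset.univ.filter (fun ω => X ω = x), p ω = pmass p X x := by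
  rw [Finset.sum_filter]; rfl

lemma condPMF_sum (p : Ω → ℝ) [DecidableEq α] (X : Ω → α) (x : α)
    (hx : pmass p X x ≠ 0) :
    ∑ ω, condPMF p (fun ω => X ω = x) ω = 1 := by
  unfold condPMF
  rw [← Finset.sum_filter, ← Finset.sum_div, filter_sum_eq_pmass, div_self hx]

lemma pmass_pair_factor [DecidableEq α] [DecidableEq β]
    (p : Ω → ℝ) (hp : ∀ ω, 0 ≤ p ω) (S : Ω → β) (X : Ω → α) (s : β) (x : α) :
    pmass p (fun ω => (S ω, X ω)) (s, x)
      = pmass p X x * pmass (condPMF p (fun ω => X ω = x)) S s := by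
  by_cases hx : pmass p X x = 0
  · rw [hx, zero_mul]
    unfold pmass at hx ⊢
    refine Finset.sum_eq_zero fun ω _ => ?_
    by_cases hXω : X ω = x
    · have hpω : p ω = 0 := by
        have hle : p ω ≤ ∑ ω', if X ω' = x then p ω' else 0 := by
          have := Finset.single_le_sum (f := fun ω' => if X ω' = x then p ω' else 0)
            (fun ω' _ => by by_cases h : X ω' = x <;> simp [h, hp ω']) (Finset.mem_univ ω)
          simpa [hXω] using this
        have := hp ω
        linarith [hx ▸ hle]
      simp [Prod.ext_iff, hpω]
    · simp [Prod.ext_iff, hXω]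
  · unfold pmass condPMF
    rw [Finset.mul_sum]
    refine Finset.sum_congr rfl fun ω _ => ?_
    rw [filter_sum_eq_pmass]
    by_cases hXω : X ω = x <;> by_cases hSω : S ω = s
    · simp only [Prod.ext_iff, hXω, hSω, and_self, if_true]
      field_simp
      rfl
    all_goals simp [Prod.ext_iff, hXω, hSω]

lemma entropy_pair_eq_aux [Fintype α] [DecidableEq α] [Fintype β] [DecidableEq β]
    (p : Ω → ℝ) (hp : ∀ ω, 0 ≤ p ω) (S : Ω → β) (X : Ω → α) :
    entropy p (fun ω => (S ω, X ω))
      = entropy p X + ∑ x, pmass p X x * entropy (condPMF p (fun ω => X ω = x)) S := by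
  unfold entropy
  rw [Fintype.sum_prod_type, Finset.sum_comm]
  have hx_eq : ∀ x, ∑ s, pmass p (fun ω => (S ω, X ω)) (s, x) *
        Real.log (pmass p (fun ω => (S ω, X ω)) (s, x))
      = pmass p X x * Real.log (pmass p X x)
        + pmass p X x * ∑ s, pmass (condPMF p (fun ω => X ω = x)) S s *
            Real.log (pmass (condPMF p (fun ω => X ω = x)) S s) := by
    intro x
    by_cases hx : pmass p X x = 0
    · have hzero : ∀ s, pmass p (fun ω => (S ω, X ω)) (s, x) = 0 := fun s => by
        rw [pmass_pair_factor p hp S X s x, hx, zero_mul]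
      simp [hzero, hx]
    · have hsum1 : ∑ s, pmass (condPMF p (fun ω => X ω = x)) S s = 1 := by
        rw [sum_pmass, condPMF_sum p X x hx]
      calc ∑ s, pmass p (fun ω => (S ω, X ω)) (s, x) *
            Real.log (pmass p (fun ω => (S ω, X ω)) (s, x))
          = ∑ s, (pmass p X x * Real.log (pmass p X x) *
              pmass (condPMF p (fun ω => X ω = x)) S s
            + pmass p X x * (pmass (condPMF p (fun ω => X ω = x)) S s *
              Real.log (pmass (condPMF p (fun ω => X ω = x)) S s))) := by
            refine Finset.sum_congr rfl fun s _ => ?_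
            rw [pmass_pair_factor p hp S X s x]
            by_cases hs : pmass (condPMF p (fun ω => X ω = x)) S s = 0
            · simp [hs]
            · rw [Real.log_mul hx hs]; ring
        _ = _ := by
            rw [Finset.sum_add_distrib, ← Finset.mul_sum, ← Finset.mul_sum, hsum1, mul_one]
  simp only [hx_eq, Finset.sum_add_distrib, neg_add, mul_neg, Finset.sum_neg_distrib]

end Aux3
section Aux4
variable {Ω α β γ : Type*} [Fintype Ω]

lemma condMutualInfo_eq_sum [Fintype α] [DecidableEq α] [Fintype β] [DecidableEq β]
    [Fintype γ] [DecidableEq γ]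
    (p : Ω → ℝ) (hp : ∀ ω, 0 ≤ p ω) (T : Ω → γ) (Y : Ω → β) (X : Ω → α) :
    condMutualInfo p T Y X
      = ∑ x, pmass p X x * mutualInfo (condPMF p fun ω => X ω = x) T Y := by
  have hassoc : entropy p (fun ω => (T ω, Y ω, X ω))
      = entropy p (fun ω => ((T ω, Y ω), X ω)) :=
    entropy_comp_injective p (fun ω => ((T ω, Y ω), X ω))
      (fun q => (q.1.1, q.1.2, q.2)) (Equiv.prodAssoc γ β α).injective
  unfold condMutualInfo mutualInfo
  rw [entropy_pair_eq_aux p hp T X, entropy_pair_eq_aux p hp Y X, hassoc,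
    entropy_pair_eq_aux p hp (fun ω => (T ω, Y ω)) X]
  simp only [mul_add, mul_sub, Finset.sum_add_distrib, Finset.sum_sub_distrib]
  ring

lemma condMutualInfo_nonneg [Fintype α] [DecidableEq α] [Fintype β] [DecidableEq β]
    [Fintype γ] [DecidableEq γ]
    (p : Ω → ℝ) (hp : ∀ ω, 0 ≤ p ω) (hp1 : ∑ ω, p ω = 1)
    (T : Ω → γ) (Y : Ω → β) (X : Ω → α) :
    0 ≤ condMutualInfo p T Y X := by
  rw [condMutualInfo_eq_sum p hp T Y X]
  refine Finset.sum_nonneg fun x _ => ?_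
  by_cases hx : pmass p X x = 0
  · simp [hx]
  · exact mul_nonneg (pmass_nonneg p hp X x)
      (mutualInfo_nonneg _ (condPMF_nonneg p hp _) (condPMF_sum p X x hx) T Y)

lemma mutualInfo_pair_chain [Fintype α] [DecidableEq α] [Fintype β] [DecidableEq β]
    [Fintype γ] [DecidableEq γ]
    (p : Ω → ℝ) (T : Ω → γ) (Y : Ω → β) (X : Ω → α) :
    mutualInfo p T (fun ω => (Y ω, X ω)) = mutualInfo p T X + condMutualInfo p T Y X := by
  unfold mutualInfo condMutualInfo
  ring

lemma mutualInfo_dpi [Fintype α] [DecidableEq α] [Fintype β] [DecidableEq β]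
    [Fintype γ] [DecidableEq γ]
    (p : Ω → ℝ) (hp : ∀ ω, 0 ≤ p ω) (hp1 : ∑ ω, p ω = 1)
    (T : Ω → γ) (X : Ω → α) (f : α → β) :
    mutualInfo p T (fun ω => f (X ω)) ≤ mutualInfo p T X := by
  have h1 : mutualInfo p T (fun ω => (X ω, f (X ω)))
      = mutualInfo p T (fun ω => f (X ω)) + condMutualInfo p T X (fun ω => f (X ω)) :=
    mutualInfo_pair_chain p T X (fun ω => f (X ω))
  have e1 : entropy p (fun ω => (X ω, f (X ω))) = entropy p X :=
    entropy_comp_injective p X (fun a => (a, f a))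
      (fun a b h => by simp only [Prod.mk.injEq] at h; exact h.1)
  have e2 : entropy p (fun ω => (T ω, X ω, f (X ω))) = entropy p (fun ω => (T ω, X ω)) :=
    entropy_comp_injective p (fun ω => (T ω, X ω)) (fun q => (q.1, q.2, f q.2))
      (fun a b h => by
        simp only [Prod.mk.injEq] at h
        exact Prod.ext h.1 h.2.1)
  have h2 : mutualInfo p T (fun ω => (X ω, f (X ω))) = mutualInfo p T X := by
    unfold mutualInfo
    rw [e1, e2]
  have h3 : 0 ≤ condMutualInfo p T X (fun ω => f (X ω)) :=
    condMutualInfo_nonneg p hp hp1 T X (fun ω => f (X ω))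
  linarith

end Aux4
/-- (Per-iteration disclosure bound for mini-batch SGD.) If each
`θ_{i+1}` is a deterministic function of `(θ_i, ghat_i)` and the initialization `θ 0` is
independent of the membership bit `T` (i.e. `I[T; θ 0] = 0`), then for any attacker
function `F` applied to the final parameters,
`I[T; F (θ_{N_r})] ≤ ∑_{i<N_r} I[T; ghat_i ∣ θ_i]`. -/
theorem sgd_membership_disclosure_bound {Ω V G W : Type*} [Fintype Ω]
    [Fintype V] [DecidableEq V] [Fintype G] [DecidableEq G] [Fintype W] [DecidableEq W]
    (p : Ω → ℝ) (hp : ∀ ω, 0 ≤ p ω) (hp1 : ∑ ω, p ω = 1)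
    (T : Ω → Bool) (Nr : ℕ)
    (θ : Fin (Nr + 1) → Ω → V) (ghat : Fin Nr → Ω → G)
    (hupdate : ∀ i : Fin Nr, ∃ u : V → G → V,
      ∀ ω, θ i.succ ω = u (θ i.castSucc ω) (ghat i ω))
    (hinit : mutualInfo p T (θ 0) = 0)
    (F : V → W) :
    mutualInfo p T (fun ω => F (θ (Fin.last Nr) ω))
      ≤ ∑ i : Fin Nr, condMutualInfo p T (ghat i) (θ i.castSucc) := by

  classical
  set f' : ℕ → ℝ := fun j => if h : j < Nr then
      condMutualInfo p T (ghat ⟨j, h⟩) (θ (Fin.castSucc ⟨j, h⟩)) else 0 with hf'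
  have key : ∀ n, (hn : n ≤ Nr) →
      mutualInfo p T (θ ⟨n, Nat.lt_succ_of_le hn⟩) ≤ ∑ j ∈ Finset.range n, f' j := by
    intro n
    induction n with
    | zero =>
      intro _
      simp only [Finset.range_zero, Finset.sum_empty]
      have h0 : (⟨0, Nat.lt_succ_of_le (Nat.zero_le Nr)⟩ : Fin (Nr + 1)) = 0 := by
        ext; simp
      rw [h0, hinit]
    | succ n ih =>
      intro hn
      have hn' : n < Nr := hn
      obtain ⟨u, hu⟩ := hupdate ⟨n, hn'⟩
      have step1 : θ (⟨n, hn'⟩ : Fin Nr).succ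
          = fun ω => (fun gv : G × V => u gv.2 gv.1)
              ((ghat ⟨n, hn'⟩ ω, θ (Fin.castSucc ⟨n, hn'⟩) ω)) := by
        funext ω; exact hu ω
      calc mutualInfo p T (θ ⟨n + 1, Nat.lt_succ_of_le hn⟩)
          ≤ mutualInfo p T (fun ω => (ghat ⟨n, hn'⟩ ω, θ (Fin.castSucc ⟨n, hn'⟩) ω)) := by
            have hmk : (⟨n + 1, Nat.lt_succ_of_le hn⟩ : Fin (Nr + 1))
                = (⟨n, hn'⟩ : Fin Nr).succ := rfl
            rw [hmk, step1]
            exact mutualInfo_dpi p hp hp1 T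
              (fun ω => (ghat ⟨n, hn'⟩ ω, θ (Fin.castSucc ⟨n, hn'⟩) ω))
              (fun gv => u gv.2 gv.1)
        _ = mutualInfo p T (θ (Fin.castSucc ⟨n, hn'⟩))
            + condMutualInfo p T (ghat ⟨n, hn'⟩) (θ (Fin.castSucc ⟨n, hn'⟩)) :=
            mutualInfo_pair_chain p T (ghat ⟨n, hn'⟩) (θ (Fin.castSucc ⟨n, hn'⟩))
        _ ≤ (∑ j ∈ Finset.range n, f' j) + f' n := by
            refine add_le_add ?_ (le_of_eq ?_)
            · have hcast : Fin.castSucc (⟨n, hn'⟩ : Fin Nr)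
                  = ⟨n, Nat.lt_succ_of_le (le_of_lt hn')⟩ := rfl
              rw [hcast]
              exact ih (le_of_lt hn')
            · simp only [hf', dif_pos hn']
        _ = ∑ j ∈ Finset.range (n + 1), f' j := (Finset.sum_range_succ _ _).symm
  have hfinal : mutualInfo p T (θ (Fin.last Nr)) ≤ ∑ j ∈ Finset.range Nr, f' j := by
    have hlast : Fin.last Nr = (⟨Nr, Nat.lt_succ_of_le le_rfl⟩ : Fin (Nr + 1)) := rfl
    rw [hlast]
    exact key Nr le_rfl
  calc mutualInfo p T (fun ω => F (θ (Fin.last Nr) ω))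
      ≤ mutualInfo p T (θ (Fin.last Nr)) := mutualInfo_dpi p hp hp1 T (θ (Fin.last Nr)) F
    _ ≤ ∑ j ∈ Finset.range Nr, f' j := hfinal
    _ = ∑ i : Fin Nr, condMutualInfo p T (ghat i) (θ i.castSucc) := by
        rw [← Fin.sum_univ_eq_sum_range]
        refine Finset.sum_congr rfl fun i _ => ?_
        simp only [hf', dif_pos i.isLt]
end
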